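/- arXiv:1709.10183 — 2 statements merged into one kernel-verified Lean document; each statement's English description precedes it below -/
import Mathlib

section
/- For an odd integer n ≥ 3 and x₀ ∈ [0,1], with J = [0,x₀] × [0,1], the sum over i ∈ S(n) of λ²(Qᵢⁿ ∩ J) plus the sum over j ∈ S(n) of λ²(Rⱼⁿ ∩ J) equals (1 − 1/n)·x₀; in particular this sum differs from λ²(J) = x₀ by at most 1/n. -/
open MeasureTheory Set

/-- The parallelogram `conv{(0,b₁),(0,b₁+δ),(1,b₂),(1,b₂+δ)}`. -/
noncomputable def Par (b₁ b₂ δ : ℝ) : Set (ℝ × ℝ) :=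
  convexHull ℝ {(0, b₁), (0, b₁ + δ), (1, b₂), (1, b₂ + δ)}

/-- The index set `S(n) = {0, 2, ..., n² - n - 2}`. -/
def Sn (n : ℕ) : Finset ℕ := (Finset.range (n ^ 2 - n - 1)).filter (fun i => Even i)

/-- The rising parallelogram `Qᵢⁿ`. -/
noncomputable def Q (n i : ℕ) : Set (ℝ × ℝ) :=
  Par ((i : ℝ) / n ^ 2) (((i : ℝ) + n) / n ^ 2) (1 / n ^ 2)

/-- The falling parallelogram `Rⱼⁿ`. -/
noncomputable def R (n j : ℕ) : Set (ℝ × ℝ) :=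
  Par (((j : ℝ) + n) / n ^ 2) ((j : ℝ) / n ^ 2) (1 / n ^ 2)

lemma shear_mp (c : ℝ) :
    MeasurePreserving (fun p : ℝ × ℝ => (p.1, p.2 + c * p.1)) volume volume := by
  rw [Measure.volume_eq_prod]
  exact (MeasurePreserving.id volume).skew_product
    (by fun_prop) (ae_of_all _ fun a => map_add_right_eq_self volume (c * a))

lemma shear_image_volume (c : ℝ) {s : Set (ℝ × ℝ)} (hs : MeasurableSet s) :
    volume ((fun p : ℝ × ℝ => (p.1, p.2 + c * p.1)) '' s) = volume s := by
  have himg : (fun p : ℝ × ℝ => (p.1, p.2 + c * p.1)) '' s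
      = (fun p : ℝ × ℝ => (p.1, p.2 + (-c) * p.1)) ⁻¹' s := by
    ext ⟨x, y⟩
    constructor
    · rintro ⟨⟨a, b⟩, hab, heq⟩
      simp only [Prod.mk.injEq] at heq
      obtain ⟨rfl, rfl⟩ := heq
      simpa [show b + c * a + -c * a = b by ring] using hab
    · intro h
      exact ⟨(x, y + -c * x), h, by simp⟩
  rw [himg]
  exact (shear_mp (-c)).measure_preimage hs.nullMeasurableSet

lemma Par_eq (b₁ δ c : ℝ) (hδ : 0 ≤ δ) :
    Par b₁ (b₁ + c) δ =
      (fun p : ℝ × ℝ => (p.1, p.2 + c * p.1)) '' (Icc (0 : ℝ) 1 ×ˢ Icc b₁ (b₁ + δ)) := by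
  have hlin : IsLinearMap ℝ (fun p : ℝ × ℝ => (p.1, p.2 + c * p.1)) := by
    constructor
    · rintro ⟨a, b⟩ ⟨a', b'⟩; simp [Prod.ext_iff]; ring
    · rintro r ⟨a, b⟩; simp [Prod.ext_iff, smul_eq_mul]; ring
  have hrect : Icc (0 : ℝ) 1 ×ˢ Icc b₁ (b₁ + δ)
      = convexHull ℝ ((({0, 1} : Set ℝ)) ×ˢ ({b₁, b₁ + δ} : Set ℝ)) := by
    rw [convexHull_prod, convexHull_pair, convexHull_pair,
      segment_eq_Icc (by norm_num : (0:ℝ) ≤ 1), segment_eq_Icc (by linarith)]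
  rw [hrect, hlin.image_convexHull, Par]
  congr 1
  have hpts : (({0, 1} : Set ℝ) ×ˢ ({b₁, b₁ + δ} : Set ℝ))
      = {((0:ℝ), b₁), (0, b₁ + δ), (1, b₁), (1, b₁ + δ)} := by
    ext ⟨x, y⟩
    simp only [Set.mem_prod, Set.mem_insert_iff, Set.mem_singleton_iff, Prod.ext_iff]
    tauto
  rw [hpts, Set.image_insert_eq, Set.image_insert_eq, Set.image_insert_eq, Set.image_singleton]
  have e0 : b₁ + c * (0:ℝ) = b₁ := by ring
  have e0' : b₁ + δ + c * (0:ℝ) = b₁ + δ := by ring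
  have e1 : b₁ + c * (1:ℝ) = b₁ + c := by ring
  have e1' : b₁ + δ + c * (1:ℝ) = b₁ + c + δ := by ring
  rw [e0, e0', e1, e1']

lemma vol_par (b₁ b₂ δ x₀ : ℝ) (hδ : 0 ≤ δ) (h0 : 0 ≤ b₁) (h0' : 0 ≤ b₂)
    (h1 : b₁ + δ ≤ 1) (h1' : b₂ + δ ≤ 1) (hx0 : 0 ≤ x₀) (hx1 : x₀ ≤ 1) :
    volume (Par b₁ b₂ δ ∩ Icc (0 : ℝ) x₀ ×ˢ Icc (0 : ℝ) 1)
      = ENNReal.ofReal x₀ * ENNReal.ofReal δ := by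
  set c := b₂ - b₁ with hc
  have hb₂ : b₂ = b₁ + c := by ring
  rw [hb₂, Par_eq b₁ δ c hδ]
  have hinter : (fun p : ℝ × ℝ => (p.1, p.2 + c * p.1)) '' (Icc (0:ℝ) 1 ×ˢ Icc b₁ (b₁ + δ))
      ∩ Icc (0 : ℝ) x₀ ×ˢ Icc (0 : ℝ) 1
      = (fun p : ℝ × ℝ => (p.1, p.2 + c * p.1)) '' (Icc (0:ℝ) x₀ ×ˢ Icc b₁ (b₁ + δ)) := by
    ext ⟨x, y⟩
    simp only [Set.mem_inter_iff, Set.mem_image, Set.mem_prod, Set.mem_Icc, Prod.mk.injEq]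
    constructor
    · rintro ⟨⟨⟨a, b⟩, ⟨⟨ha0, ha1⟩, hb⟩, rfl, rfl⟩, ⟨hx0', hxx⟩, _⟩
      exact ⟨(a, b), ⟨⟨ha0, hxx⟩, hb⟩, rfl, rfl⟩
    · rintro ⟨⟨a, b⟩, ⟨⟨ha0, ha1⟩, hb1, hb2⟩, rfl, rfl⟩
      have ha1' : a ≤ 1 := le_trans ha1 hx1
      refine ⟨⟨(a, b), ⟨⟨ha0, ha1'⟩, hb1, hb2⟩, rfl, rfl⟩, ⟨ha0, ha1⟩, ?_, ?_⟩
      · nlinarith [mul_nonneg ha0 (sub_nonneg.2 ha1'), mul_nonneg (sub_nonneg.2 ha1') ha0]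
      · nlinarith
  rw [hinter, shear_image_volume c (measurableSet_Icc.prod measurableSet_Icc),
    Measure.volume_eq_prod, Measure.prod_prod, Real.volume_Icc, Real.volume_Icc]
  congr 1 <;> ring_nf

lemma card_even_range (m : ℕ) :
    ((Finset.range m).filter (fun i => Even i)).card = (m + 1) / 2 := by
  induction m with
  | zero => simp
  | succ m ih =>
    rw [Finset.range_add_one, Finset.filter_insert]
    by_cases hm : Even m
    · rw [if_pos hm, Finset.card_insert_of_notMem (by simp), ih]
      rw [Nat.even_iff] at hm; omega
    · rw [if_neg hm, ih]
      rw [Nat.even_iff] at hm; omega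

theorem stmt4 (n : ℕ) (hn3 : 3 ≤ n) (hodd : Odd n) (x₀ : ℝ) (hx₀ : x₀ ∈ Icc (0 : ℝ) 1) :
    (∑ i ∈ Sn n, volume (Q n i ∩ Icc (0 : ℝ) x₀ ×ˢ Icc (0 : ℝ) 1) +
        ∑ j ∈ Sn n, volume (R n j ∩ Icc (0 : ℝ) x₀ ×ˢ Icc (0 : ℝ) 1)) =
      ENNReal.ofReal ((1 - 1 / n) * x₀) ∧
    |(∑ i ∈ Sn n, volume (Q n i ∩ Icc (0 : ℝ) x₀ ×ˢ Icc (0 : ℝ) 1)).toReal +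
        (∑ j ∈ Sn n, volume (R n j ∩ Icc (0 : ℝ) x₀ ×ˢ Icc (0 : ℝ) 1)).toReal - x₀| ≤
      1 / n := by
  obtain ⟨hx0, hx1⟩ := hx₀
  have hn0 : (0 : ℝ) < n := by positivity
  have hn1 : (3 : ℝ) ≤ n := by exact_mod_cast hn3
  have hn2 : (0 : ℝ) < (n : ℝ) ^ 2 := by positivity
  have hnn : n ≤ n ^ 2 := by nlinarith
  have hnn2 : n + 2 ≤ n ^ 2 := by nlinarith
  -- bound for indices
  have hbound : ∀ i ∈ Sn n, (i : ℝ) + n + 1 ≤ (n : ℝ) ^ 2 := by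
    intro i hi
    simp only [Sn, Finset.mem_filter, Finset.mem_range] at hi
    have : i + n + 1 ≤ n ^ 2 := by omega
    calc (i : ℝ) + n + 1 = ((i + n + 1 : ℕ) : ℝ) := by push_cast; ring
    _ ≤ ((n ^ 2 : ℕ) : ℝ) := by exact_mod_cast this
    _ = (n : ℝ) ^ 2 := by push_cast; ring
  have hvolQ : ∀ i ∈ Sn n, volume (Q n i ∩ Icc (0 : ℝ) x₀ ×ˢ Icc (0 : ℝ) 1)
      = ENNReal.ofReal x₀ * ENNReal.ofReal (1 / (n : ℝ) ^ 2) := by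
    intro i hi
    have hb := hbound i hi
    have hi0 : (0 : ℝ) ≤ (i : ℝ) := Nat.cast_nonneg i
    exact vol_par _ _ _ _ (by positivity) (by positivity) (by positivity)
      (by rw [← add_div, div_le_one hn2]; linarith)
      (by rw [← add_div, div_le_one hn2]; linarith) hx0 hx1
  have hvolR : ∀ j ∈ Sn n, volume (R n j ∩ Icc (0 : ℝ) x₀ ×ˢ Icc (0 : ℝ) 1)
      = ENNReal.ofReal x₀ * ENNReal.ofReal (1 / (n : ℝ) ^ 2) := by
    intro j hj
    have hb := hbound j hj
    have hj0 : (0 : ℝ) ≤ (j : ℝ) := Nat.cast_nonneg j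
    exact vol_par _ _ _ _ (by positivity) (by positivity) (by positivity)
      (by rw [← add_div, div_le_one hn2]; linarith)
      (by rw [← add_div, div_le_one hn2]; linarith) hx0 hx1
  -- cardinality
  have heven : Even (n ^ 2 - n) := by
    rw [Nat.even_sub hnn, Nat.even_pow]
    constructor
    · rintro ⟨h, -⟩; exact h
    · intro h; exact ⟨h, two_ne_zero⟩
  have hcard : 2 * (Sn n).card = n ^ 2 - n := by
    rw [Sn, card_even_range]
    obtain ⟨k, hk⟩ := heven
    omega
  have hsum : (∑ i ∈ Sn n, volume (Q n i ∩ Icc (0 : ℝ) x₀ ×ˢ Icc (0 : ℝ) 1) +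
      ∑ j ∈ Sn n, volume (R n j ∩ Icc (0 : ℝ) x₀ ×ˢ Icc (0 : ℝ) 1)) =
      ENNReal.ofReal ((1 - 1 / n) * x₀) := by
    rw [Finset.sum_congr rfl hvolQ, Finset.sum_congr rfl hvolR, Finset.sum_const,
      ← add_nsmul, nsmul_eq_mul]
    have hcc : ((Sn n).card + (Sn n).card) = n ^ 2 - n := by omega
    rw [hcc, ← ENNReal.ofReal_natCast, ← ENNReal.ofReal_mul (by positivity),
      ← ENNReal.ofReal_mul (Nat.cast_nonneg _)]
    congr 1
    rw [Nat.cast_sub hnn]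
    push_cast
    field_simp
  refine ⟨hsum, ?_⟩
  have hfin := hsum ▸ (ENNReal.ofReal_ne_top : ENNReal.ofReal ((1 - 1 / (n:ℝ)) * x₀) ≠ ⊤)
  obtain ⟨h1, h2⟩ := ENNReal.add_ne_top.mp hfin
  have htr : (∑ i ∈ Sn n, volume (Q n i ∩ Icc (0 : ℝ) x₀ ×ˢ Icc (0 : ℝ) 1)).toReal +
      (∑ j ∈ Sn n, volume (R n j ∩ Icc (0 : ℝ) x₀ ×ˢ Icc (0 : ℝ) 1)).toReal
      = (1 - 1 / n) * x₀ := by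
    rw [← ENNReal.toReal_add h1 h2, hsum, ENNReal.toReal_ofReal]
    have : 1 / (n : ℝ) ≤ 1 := by
      rw [div_le_one hn0]; linarith
    nlinarith
  rw [htr]
  rw [abs_le]
  have h1n : 0 < 1 / (n : ℝ) := by positivity
  constructor <;> nlinarith [mul_nonneg (le_of_lt h1n) hx0, mul_le_of_le_one_right (le_of_lt h1n) hx1]
end

section
/- Assuming the existence of a Nikodym set, there exists a family of closed segments (I_t)_{t∈T}, each joining a point (0,a) to a point (1,b) within the unit square [0,1]², such that ⋃_t I_t contains {0} × [0,1] and λ²(⋃_t I_t) = 0. -/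
open MeasureTheory Set

/-- A line in the plane: an affine line `{p + s • v : s ∈ ℝ}` with `v ≠ 0`. -/
def IsLine (l : Set (ℝ × ℝ)) : Prop :=
  ∃ p v : ℝ × ℝ, v ≠ 0 ∧ l = {q | ∃ s : ℝ, q = p + s • v}

theorem stmt13 (T : Type*) (l : T → Set (ℝ × ℝ)) (w : T → ℝ × ℝ)
    (hline : ∀ t, IsLine (l t)) (hw : ∀ t, w t ∈ l t)
    (hsurj : Set.range w = Set.univ)
    (hnull : volume (⋃ t, l t \ {w t}) = 0) :
    ∃ (T' : Type) (a b : T' → ℝ),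
      (∀ t, a t ∈ Icc (0 : ℝ) 1 ∧ b t ∈ Icc (0 : ℝ) 1) ∧
      ({0} : Set ℝ) ×ˢ Icc (0 : ℝ) 1 ⊆ ⋃ t, segment ℝ ((0 : ℝ), a t) ((1 : ℝ), b t) ∧
      volume (⋃ t, segment ℝ ((0 : ℝ), a t) ((1 : ℝ), b t)) = 0 := by
  classical
  -- a measurable null superset of the union of punctured lines
  set N : Set (ℝ × ℝ) := toMeasurable volume (⋃ t, l t \ {w t}) with hNdef
  have hNmeas : MeasurableSet N := measurableSet_toMeasurable _ _
  have hN0sub : (⋃ t, l t \ {w t}) ⊆ N := subset_toMeasurable _ _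
  have hNnull : volume N = 0 := by
    rw [hNdef, measure_toMeasurable]; exact hnull
  -- the slice function
  set g : ℝ → ENNReal := fun u => volume (Prod.mk u ⁻¹' N) with hg
  have hgmeas : Measurable g := measurable_measure_prodMk_left hNmeas
  have hint : ∫⁻ u, g u = 0 := by
    have h1 : (volume : Measure (ℝ × ℝ)) N = ∫⁻ u, g u := by
      rw [MeasureTheory.Measure.volume_eq_prod, Measure.prod_apply hNmeas]
    rw [← h1]; exact hNnull
  have hvol_ne : (volume : Measure ℝ) ≠ 0 := by
    intro h
    have h2 := Real.volume_Ioi (a := (0 : ℝ))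
    rw [h] at h2
    simp at h2
  haveI : (MeasureTheory.ae (volume : Measure ℝ)).NeBot := ae_neBot.mpr hvol_ne
  have hae : ∀ᵐ u, g u = 0 := (lintegral_eq_zero_iff hgmeas).mp hint
  obtain ⟨x0, hx0⟩ := hae.exists
  -- choose lines based at the points (x0, y)
  have hcov : ∀ y : ℝ, ∃ t, w t = (x0, y) := by
    intro y
    have : ((x0, y) : ℝ × ℝ) ∈ Set.range w := by rw [hsurj]; trivial
    exact this
  choose t ht using hcov
  choose p v hv hl using fun y => hline (t y)
  have hmem : ∀ y : ℝ, ∃ s : ℝ, ((x0 : ℝ), y) = p y + s • v y := by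
    intro y
    have h := hw (t y)
    rw [ht y, hl y] at h
    exact h
  choose s0 hs0 using hmem
  have hNmem : ∀ (y s : ℝ), p y + s • v y ≠ (x0, y) → p y + s • v y ∈ N := by
    intro y s hne
    refine hN0sub (mem_iUnion.mpr ⟨t y, ?_, ?_⟩)
    · rw [hl y]; exact ⟨s, rfl⟩
    · simp only [mem_singleton_iff]
      rw [ht y]; exact hne
  -- no vertical line based at (x0, y)
  have hv1 : ∀ y, (v y).1 ≠ 0 := by
    intro y h1
    have h2 : (v y).2 ≠ 0 := fun h2 => hv y (Prod.ext h1 h2)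
    have hcoord := hs0 y
    rw [Prod.ext_iff] at hcoord
    simp only [Prod.fst_add, Prod.snd_add, Prod.smul_fst, Prod.smul_snd, smul_eq_mul] at hcoord
    obtain ⟨hc1, hc2⟩ := hcoord
    have hp1 : (p y).1 = x0 - s0 y * (v y).1 := by linarith
    have hp2 : (p y).2 = y - s0 y * (v y).2 := by linarith
    have hsub : Ioi y ⊆ Prod.mk x0 ⁻¹' N := by
      intro z hz
      have hzy : z ≠ y := ne_of_gt hz
      have hkey : p y + (s0 y + (z - y) / (v y).2) • v y = (x0, z) := by
        rw [Prod.ext_iff]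
        simp only [Prod.fst_add, Prod.snd_add, Prod.smul_fst, Prod.smul_snd, smul_eq_mul]
        constructor
        · rw [hp1, h1]
          ring
        · rw [hp2]
          field_simp
          ring
      have hne : p y + (s0 y + (z - y) / (v y).2) • v y ≠ (x0, y) := by
        rw [hkey]
        intro hcon
        rw [Prod.ext_iff] at hcon
        exact hzy hcon.2
      have := hNmem y _ hne
      rw [hkey] at this
      exact this
    have hge : (⊤ : ENNReal) ≤ g x0 := by
      rw [← Real.volume_Ioi (a := y), hg]
      exact measure_mono hsub
    rw [hx0] at hge
    simp at hge
  -- the slope of the line based at (x0, y)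
  set m : ℝ → ℝ := fun y => (v y).2 / (v y).1 with hm
  -- all points of the line other than the base point lie in N
  have hpt : ∀ (y u : ℝ), u ≠ 0 → ((x0 + u, y + u * m y) : ℝ × ℝ) ∈ N := by
    intro y u hu
    have hcoord := hs0 y
    rw [Prod.ext_iff] at hcoord
    simp only [Prod.fst_add, Prod.snd_add, Prod.smul_fst, Prod.smul_snd, smul_eq_mul] at hcoord
    obtain ⟨hc1, hc2⟩ := hcoord
    have h1 := hv1 y
    have hp1 : (p y).1 = x0 - s0 y * (v y).1 := by linarith
    have hp2 : (p y).2 = y - s0 y * (v y).2 := by linarith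
    have hkey : p y + (s0 y + u / (v y).1) • v y = (x0 + u, y + u * m y) := by
      rw [Prod.ext_iff]
      simp only [Prod.fst_add, Prod.snd_add, Prod.smul_fst, Prod.smul_snd, smul_eq_mul]
      constructor
      · rw [hp1]
        field_simp
        ring
      · rw [hp2, hm]
        field_simp
        ring
    have hne : p y + (s0 y + u / (v y).1) • v y ≠ (x0, y) := by
      rw [hkey]
      intro hcon
      rw [Prod.ext_iff] at hcon
      have : x0 + u = x0 := hcon.1
      exact hu (by linarith)
    have := hNmem y _ hne
    rw [hkey] at this
    exact this
  -- the family of segments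
  set A : ℝ → ℝ := fun y => if y ∈ Icc (0 : ℝ) 1 then y else 0 with hA
  have hA01 : ∀ y, A y ∈ Icc (0 : ℝ) 1 := by
    intro y
    rw [hA]
    dsimp only
    split
    · assumption
    · exact ⟨le_refl 0, zero_le_one⟩
  set c : ℝ → ℝ := fun y => A y + m (A y) with hc
  set B : ℝ → ℝ := fun y => Int.fract (c y) with hB
  refine ⟨ℝ, A, B, ?_, ?_, ?_⟩
  · intro y
    exact ⟨hA01 y, ⟨Int.fract_nonneg _, (Int.fract_lt_one _).le⟩⟩
  · rintro ⟨x, z⟩ ⟨hx, hz⟩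
    simp only [mem_singleton_iff] at hx
    subst hx
    refine mem_iUnion.mpr ⟨z, ?_⟩
    have hAz : A z = z := by rw [hA]; exact if_pos hz
    rw [hAz]
    exact left_mem_segment ℝ _ _
  · -- the measure-zero estimate
    set C : ℤ → Set (ℝ × ℝ) :=
      fun n => (fun q : ℝ × ℝ => ((q.1 + x0 : ℝ), (q.2 + (n : ℝ) * q.1 : ℝ))) ⁻¹' N with hCdef
    have hphimeas : ∀ n : ℤ, Measurable (fun q : ℝ × ℝ => ((q.1 + x0 : ℝ), (q.2 + (n : ℝ) * q.1 : ℝ))) := by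
      intro n
      fun_prop
    have hCmeas : ∀ n : ℤ, MeasurableSet (C n) := fun n => hNmeas.preimage (hphimeas n)
    have hCnull : ∀ n : ℤ, volume (C n) = 0 := by
      intro n
      have hmeas := hCmeas n
      rw [hCdef] at hmeas ⊢
      rw [MeasureTheory.Measure.volume_eq_prod, Measure.prod_apply hmeas]
      have key : ∀ x : ℝ,
          volume (Prod.mk x ⁻¹'
            ((fun q : ℝ × ℝ => ((q.1 + x0 : ℝ), (q.2 + (n : ℝ) * q.1 : ℝ))) ⁻¹' N))
          = g (x + x0) := by
        intro x
        have hsl : Prod.mk x ⁻¹'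
            ((fun q : ℝ × ℝ => ((q.1 + x0 : ℝ), (q.2 + (n : ℝ) * q.1 : ℝ))) ⁻¹' N)
            = (fun z : ℝ => z + (n : ℝ) * x) ⁻¹' (Prod.mk (x + x0) ⁻¹' N) := rfl
        rw [hsl, hg]
        exact measure_preimage_add_right volume ((n : ℝ) * x) _
      rw [lintegral_congr key, lintegral_add_right_eq_self g x0]
      exact hint
    have hsub : (⋃ y : ℝ, segment ℝ ((0 : ℝ), A y) ((1 : ℝ), B y)) ⊆
        ((({(0 : ℝ)} : Set ℝ) ×ˢ (univ : Set ℝ)) ∪ (({(1 : ℝ)} : Set ℝ) ×ˢ (univ : Set ℝ))) ∪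
          ⋃ n : ℤ, C n := by
      rintro q hq
      rw [mem_iUnion] at hq
      obtain ⟨y, hqy⟩ := hq
      rw [segment_eq_image] at hqy
      obtain ⟨θ, hθ, hqeq⟩ := hqy
      have hq2 : q = (θ, (1 - θ) * A y + θ * B y) := by
        rw [← hqeq]
        rw [Prod.ext_iff]
        simp only [Prod.fst_add, Prod.snd_add, Prod.smul_fst, Prod.smul_snd, smul_eq_mul]
        constructor
        · ring_nf
        · trivial
      rcases eq_or_ne θ 0 with h0 | h0
      · left; left
        rw [hq2, h0]
        exact ⟨rfl, trivial⟩
      rcases eq_or_ne θ 1 with h1 | h1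
      · left; right
        rw [hq2, h1]
        exact ⟨rfl, trivial⟩
      · right
        refine mem_iUnion.mpr ⟨⌊c y⌋, ?_⟩
        rw [hCdef, mem_preimage]
        have hfr : B y = c y - (⌊c y⌋ : ℝ) := by
          rw [hB]
          exact (Int.self_sub_floor (c y)).symm
        have hco : ((x0 + θ : ℝ), A y + θ * m (A y)) =
            (((θ, (1 - θ) * A y + θ * B y) : ℝ × ℝ).1 + x0,
             ((θ, (1 - θ) * A y + θ * B y) : ℝ × ℝ).2 +
               ((⌊c y⌋ : ℤ) : ℝ) * ((θ, (1 - θ) * A y + θ * B y) : ℝ × ℝ).1) := by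
          rw [Prod.ext_iff]
          constructor
          · simp only; ring
          · simp only
            rw [hfr, hc]
            ring
        rw [hq2, ← hco]
        exact hpt (A y) θ h0
    have h0' : volume ((({(0 : ℝ)} : Set ℝ) ×ˢ (univ : Set ℝ))) = 0 := by
      rw [MeasureTheory.Measure.volume_eq_prod, Measure.prod_prod, Real.volume_singleton, zero_mul]
    have h1' : volume ((({(1 : ℝ)} : Set ℝ) ×ˢ (univ : Set ℝ))) = 0 := by
      rw [MeasureTheory.Measure.volume_eq_prod, Measure.prod_prod, Real.volume_singleton, zero_mul]
    exact measure_mono_null hsub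
      (measure_union_null (measure_union_null h0' h1') (measure_iUnion_null hCnull))
end
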